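/- arXiv:2111.15099 — 2 statements merged into one kernel-verified Lean document; each statement's English description precedes it below -/
import Mathlib

section
/- Let T₀ be an optimal transport map for (μ,ν) with μ ≪ Lebesgue, and suppose 0 < η < ℓ₀(T₀). Then for μ-almost all x₀, the minimization problem min_{x∈Ω} (1/2)|x − x₀|² + η·u₀(x) has a unique solution, given explicitly by x₁ = x₀ − η∇u₀(x₀), where u₀ is a Kantorovich potential for (μ,ν). -/
open MeasureTheory Filter Topology
open scoped RealInnerProductSpace NNReal

noncomputable section

section Aux
variable {E : Type*} [NormedAddCommGroup E] [InnerProductSpace ℝ E] [CompleteSpace E]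

lemma sandwich_lemma {u : E → ℝ} (hL : LipschitzWith 1 u) {x v : E}
    (heq : u x - u (x + v) = ‖v‖) {s : ℝ} (h0 : 0 ≤ s) (h1 : s ≤ 1) :
    u (x + s • v) = u x - s * ‖v‖ := by
  have hA : u x - u (x + s • v) ≤ s * ‖v‖ := by
    have h := hL.dist_le_mul x (x + s • v)
    rw [Real.dist_eq, dist_eq_norm] at h
    have h2 : ‖x - (x + s • v)‖ = s * ‖v‖ := by
      simp [norm_smul, abs_of_nonneg h0]
    calc u x - u (x + s • v) ≤ |u x - u (x + s • v)| := le_abs_self _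
      _ ≤ 1 * ‖x - (x + s • v)‖ := h
      _ = s * ‖v‖ := by rw [one_mul, h2]
  have hB : u (x + s • v) - u (x + v) ≤ (1 - s) * ‖v‖ := by
    have h := hL.dist_le_mul (x + s • v) (x + v)
    rw [Real.dist_eq, dist_eq_norm] at h
    have h2 : ‖(x + s • v) - (x + v)‖ = (1 - s) * ‖v‖ := by
      have : (x + s • v) - (x + v) = (s - 1) • v := by
        rw [sub_smul, one_smul]; abel
      rw [this, norm_smul, Real.norm_eq_abs, abs_of_nonpos (by linarith)]
      ring
    calc u (x + s • v) - u (x + v) ≤ |u (x + s • v) - u (x + v)| := le_abs_self _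
      _ ≤ 1 * ‖(x + s • v) - (x + v)‖ := h
      _ = (1 - s) * ‖v‖ := by rw [one_mul, h2]
  have hsum : s * ‖v‖ + (1 - s) * ‖v‖ = ‖v‖ := by ring
  linarith

lemma dir_lemma {u : E → ℝ} (hL : LipschitzWith 1 u) {x : E}
    (hd : DifferentiableAt ℝ u x) {v : E}
    (heq : u x - u (x + v) = ‖v‖) :
    v = -(‖v‖ • gradient u x) := by
  by_cases hv : v = 0
  · simp [hv]
  set g := gradient u x with hgdef
  -- derivative of s ↦ u (x + s • v) at 0
  have h1 : HasDerivAt (fun s : ℝ => x + s • v) v 0 := by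
    simpa using ((hasDerivAt_id (0 : ℝ)).smul_const v).const_add x
  have h2 : HasDerivAt (fun s : ℝ => u (x + s • v)) (fderiv ℝ u x v) 0 := by
    have h3 : HasFDerivAt u (fderiv ℝ u x) ((fun s : ℝ => x + s • v) 0) := by
      simpa using hd.hasFDerivAt
    exact h3.comp_hasDerivAt 0 h1
  set φ := fun s : ℝ => u (x + s • v) with hφdef
  have h3 : Tendsto (slope φ 0) (𝓝[>] (0 : ℝ)) (𝓝 (fderiv ℝ u x v)) := by
    have := (hasDerivAt_iff_tendsto_slope.mp h2)
    exact this.mono_left (nhdsWithin_mono _ (fun s hs => ne_of_gt hs))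
  have h4 : Tendsto (slope φ 0) (𝓝[>] (0 : ℝ)) (𝓝 (-‖v‖)) := by
    have hev : ∀ᶠ s in 𝓝[>] (0 : ℝ), slope φ 0 s = -‖v‖ := by
      filter_upwards [Ioc_mem_nhdsGT_of_mem ⟨le_refl (0:ℝ), zero_lt_one⟩] with s hs
      have hval := sandwich_lemma hL heq hs.1.le hs.2
      have hs0 : s ≠ 0 := ne_of_gt hs.1
      rw [slope_def_field]
      show (u (x + s • v) - u (x + (0:ℝ) • v)) / (s - 0) = -‖v‖
      rw [hval]
      simp only [zero_smul, add_zero, sub_zero]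
      field_simp
      ring
    exact tendsto_const_nhds.congr' (by filter_upwards [hev] with s h using h.symm)
  have hDv : fderiv ℝ u x v = -‖v‖ := tendsto_nhds_unique h3 h4
  have hinner : ⟪g, v⟫ = -‖v‖ := by
    rw [hgdef]
    unfold gradient
    rw [InnerProductSpace.toDual_symm_apply, hDv]
  have hgnorm : ‖g‖ ≤ 1 := by
    have h5 : ‖fderiv ℝ u x‖ ≤ (1 : ℝ≥0) := norm_fderiv_le_of_lipschitz ℝ hL
    have h6 : ‖g‖ = ‖fderiv ℝ u x‖ := by
      rw [hgdef]; unfold gradient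
      exact (LinearIsometryEquiv.norm_map _ _)
    rw [h6]; exact_mod_cast h5
  have hz : ‖v + ‖v‖ • g‖ ^ 2 ≤ 0 := by
    rw [norm_add_sq_real]
    have e1 : ⟪v, ‖v‖ • g⟫ = ‖v‖ * ⟪g, v⟫ := by
      rw [real_inner_smul_right, real_inner_comm]
    have e2 : ‖(‖v‖ : ℝ) • g‖ = ‖v‖ * ‖g‖ := by
      rw [norm_smul, Real.norm_eq_abs, abs_of_nonneg (norm_nonneg v)]
    rw [e1, hinner, e2]
    have hvn : (0:ℝ) ≤ ‖v‖ := norm_nonneg v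
    have hm : ‖v‖ * ‖g‖ ≤ ‖v‖ := mul_le_of_le_one_right hvn hgnorm
    have hm2 : (‖v‖ * ‖g‖) ^ 2 ≤ ‖v‖ ^ 2 :=
      pow_le_pow_left₀ (mul_nonneg hvn (norm_nonneg g)) hm 2
    nlinarith
  have hz2 : v + ‖v‖ • g = 0 := by
    have := sq_nonneg ‖v + ‖v‖ • g‖
    have h0 : ‖v + ‖v‖ • g‖ ^ 2 = 0 := le_antisymm hz this
    have : ‖v + ‖v‖ • g‖ = 0 := by
      nlinarith [norm_nonneg (v + ‖v‖ • g)]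
    exact norm_eq_zero.mp this
  linear_combination (norm := module) hz2

end Aux

abbrev Euc (d : ℕ) := EuclideanSpace ℝ (Fin d)

/-- The Wasserstein-1 distance, defined through Kantorovich duality as the supremum of
`∫ u dμ - ∫ u dν` over 1-Lipschitz functions `u`. -/
def W1 {d : ℕ} (μ ν : Measure (Euc d)) : ℝ :=
  sSup {r : ℝ | ∃ u : Euc d → ℝ, LipschitzWith 1 u ∧ r = (∫ x, u x ∂μ) - ∫ y, u y ∂ν}

/-- `u` is a Kantorovich potential for the pair `(μ, ν)`. -/
def IsKantorovichPotential {d : ℕ} (u : Euc d → ℝ) (μ ν : Measure (Euc d)) : Prop :=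
  LipschitzWith 1 u ∧ (∫ x, u x ∂μ) - ∫ y, u y ∂ν = W1 μ ν

/-- `T` is an optimal transport map for the pair `(μ, ν)`. -/
def IsOptimalMap {d : ℕ} (T : Euc d → Euc d) (μ ν : Measure (Euc d)) : Prop :=
  Measure.map T μ = ν ∧ (∫ x, ‖x - T x‖ ∂μ) = W1 μ ν

/-- The minimal transport length `ℓ₀(T) = essinf_μ |Id - T|`. -/
def ell0 {d : ℕ} (T : Euc d → Euc d) (μ : Measure (Euc d)) : ℝ :=
  essInf (fun x => ‖x - T x‖) μ


/-- for μ-a.e. `x₀`, the adversarial-regularization problem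
`min_{x ∈ Ω} (1/2)|x - x₀|² + η u₀(x)` has `x₀ - η ∇u₀(x₀)` as its unique solution. -/
theorem adversarial_reg_is_ttc_step {d : ℕ} (Ω : Set (Euc d))
    (hΩc : IsCompact Ω) (hΩconv : Convex ℝ Ω)
    (μ ν : Measure (Euc d)) [IsProbabilityMeasure μ] [IsProbabilityMeasure ν]
    (hμΩ : μ Ωᶜ = 0) (hνΩ : ν Ωᶜ = 0) (hac : μ ≪ volume)
    (u₀ : Euc d → ℝ) (hu₀ : IsKantorovichPotential u₀ μ ν)
    (T₀ : Euc d → Euc d) (hT₀ : IsOptimalMap T₀ μ ν)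
    (η : ℝ) (hηpos : 0 < η) (hη : η < ell0 T₀ μ) :
    ∀ᵐ x₀ ∂μ, DifferentiableAt ℝ u₀ x₀ ∧
      x₀ - η • gradient u₀ x₀ ∈ Ω ∧
      ∀ x ∈ Ω, x ≠ x₀ - η • gradient u₀ x₀ →
        (1 / 2) * ‖(x₀ - η • gradient u₀ x₀) - x₀‖ ^ 2
            + η * u₀ (x₀ - η • gradient u₀ x₀)
          < (1 / 2) * ‖x - x₀‖ ^ 2 + η * u₀ x := by
  obtain ⟨hLip, hKant⟩ := hu₀
  obtain ⟨hmap, hopt⟩ := hT₀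
  have hTmeas : AEMeasurable T₀ μ := by
    refine aemeasurable_of_map_neZero ⟨?_⟩
    rw [hmap]
    exact (IsProbabilityMeasure.ne_zero ν)
  have hΩmeas : MeasurableSet Ω := hΩc.isClosed.measurableSet
  have hxΩ : ∀ᵐ x ∂μ, x ∈ Ω := by
    rw [ae_iff]
    simpa [Set.compl_def] using hμΩ
  have hTΩ : ∀ᵐ x ∂μ, T₀ x ∈ Ω := by
    have h0 : μ (T₀ ⁻¹' Ωᶜ) = 0 := by
      rw [← Measure.map_apply_of_aemeasurable hTmeas hΩmeas.compl, hmap]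
      exact hνΩ
    rw [ae_iff]
    simpa [Set.preimage, Set.compl_def] using h0
  -- bounds on Ω
  obtain ⟨C, hC⟩ := hΩc.exists_bound_of_continuousOn hLip.continuous.continuousOn
  obtain ⟨R, hR⟩ := isBounded_iff_forall_norm_le.mp hΩc.isBounded
  -- integrability
  have int_u : Integrable u₀ μ := by
    refine Integrable.mono' (integrable_const C) hLip.continuous.aestronglyMeasurable ?_
    filter_upwards [hxΩ] with x hx using hC x hx
  have int_uT : Integrable (fun x => u₀ (T₀ x)) μ := by
    refine Integrable.mono' (integrable_const C)
      (hLip.continuous.measurable.comp_aemeasurable hTmeas).aestronglyMeasurable ?_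
    filter_upwards [hTΩ] with x hx using hC _ hx
  have int_d : Integrable (fun x => ‖x - T₀ x‖) μ := by
    refine Integrable.mono' (integrable_const (R + R))
      ((aemeasurable_id.sub hTmeas).norm.aestronglyMeasurable) ?_
    filter_upwards [hxΩ, hTΩ] with x hx hTx
    have := norm_sub_le x (T₀ x)
    simp only [norm_norm]
    exact this.trans (add_le_add (hR x hx) (hR _ hTx))
  -- change of variables
  have hCoV : ∫ x, u₀ (T₀ x) ∂μ = ∫ y, u₀ y ∂ν := by
    rw [← hmap, integral_map hTmeas hLip.continuous.aestronglyMeasurable]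
  -- key a.e. equality
  have key : ∀ᵐ x ∂μ, u₀ x - u₀ (T₀ x) = ‖x - T₀ x‖ := by
    have hnonneg : 0 ≤ᵐ[μ] fun x => ‖x - T₀ x‖ - (u₀ x - u₀ (T₀ x)) := by
      refine Eventually.of_forall fun x => ?_
      have h := hLip.dist_le_mul x (T₀ x)
      rw [Real.dist_eq, dist_eq_norm] at h
      have h2 : u₀ x - u₀ (T₀ x) ≤ 1 * ‖x - T₀ x‖ := (le_abs_self _).trans h
      rw [one_mul] at h2
      show (0:ℝ) ≤ ‖x - T₀ x‖ - (u₀ x - u₀ (T₀ x))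
      linarith
    have int_s : Integrable (fun x => u₀ x - u₀ (T₀ x)) μ := int_u.sub int_uT
    have hint : Integrable (fun x => ‖x - T₀ x‖ - (u₀ x - u₀ (T₀ x))) μ :=
      int_d.sub int_s
    have hzero : ∫ x, (‖x - T₀ x‖ - (u₀ x - u₀ (T₀ x))) ∂μ = 0 := by
      rw [integral_sub int_d int_s, integral_sub int_u int_uT, hCoV, hopt, hKant]
      ring
    have := (integral_eq_zero_iff_of_nonneg_ae hnonneg hint).mp hzero
    filter_upwards [this] with x hx
    have : ‖x - T₀ x‖ - (u₀ x - u₀ (T₀ x)) = 0 := hx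
    linarith
  -- a.e. lower bound on transport distance
  have hlen : ∀ᵐ x ∂μ, η < ‖x - T₀ x‖ := by
    refine ae_lt_of_lt_essInf hη ?_
    exact ⟨0, Filter.eventually_map.2 (Eventually.of_forall fun x => norm_nonneg _)⟩
  -- Rademacher
  have hdiff : ∀ᵐ x ∂μ, DifferentiableAt ℝ u₀ x := hac.ae_le hLip.ae_differentiableAt
  filter_upwards [hdiff, hxΩ, hTΩ, key, hlen] with x₀ hd hx₀Ω hTx₀Ω hkey hℓ
  set g := gradient u₀ x₀ with hgdef
  set ℓ := ‖x₀ - T₀ x₀‖ with hℓdef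
  have hℓpos : 0 < ℓ := lt_trans hηpos hℓ
  set v : Euc d := T₀ x₀ - x₀ with hvdef
  have hvnorm : ‖v‖ = ℓ := by rw [hvdef, hℓdef, norm_sub_rev]
  have hx₀v : x₀ + v = T₀ x₀ := by rw [hvdef]; abel
  have heq : u₀ x₀ - u₀ (x₀ + v) = ‖v‖ := by rw [hx₀v, hvnorm]; exact hkey
  have hdir : v = -(‖v‖ • g) := dir_lemma hLip hd heq
  have hgnorm : ‖g‖ = 1 := by
    have : ‖v‖ = ‖v‖ * ‖g‖ := by
      conv_lhs => rw [hdir]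
      rw [norm_neg, norm_smul, Real.norm_eq_abs, abs_of_nonneg (norm_nonneg v)]
    have hv0 : ‖v‖ ≠ 0 := by rw [hvnorm]; exact ne_of_gt hℓpos
    field_simp at this
    tauto
  have hgv : η • g = -((η / ℓ) • v) := by
    rw [hdir, smul_neg, neg_neg, smul_smul, hvnorm]
    congr 1
    field_simp
  set x₁ := x₀ - η • g with hx₁def
  have hx₁ : x₁ = x₀ + (η / ℓ) • v := by rw [hx₁def, hgv]; abel
  have hsΩ : (0:ℝ) ≤ η / ℓ := le_of_lt (div_pos hηpos hℓpos)
  have hs1 : η / ℓ ≤ 1 := by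
    rw [div_le_one hℓpos]; exact le_of_lt hℓ
  constructor
  · exact hd
  constructor
  · -- x₁ ∈ Ω
    have hcomb := hΩconv hx₀Ω hTx₀Ω (by linarith : (0:ℝ) ≤ 1 - η / ℓ) hsΩ (by ring)
    have : (1 - η / ℓ) • x₀ + (η / ℓ) • T₀ x₀ = x₁ := by
      rw [hx₁, ← hx₀v]
      module
    rwa [this] at hcomb
  · intro x hxΩ' hne
    have hu₁ : u₀ x₁ = u₀ x₀ - η := by
      rw [hx₁, sandwich_lemma hLip heq hsΩ hs1, hvnorm]
      field_simp
    have hx₁n : ‖x₁ - x₀‖ = η := by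
      have : x₁ - x₀ = -(η • g) := by rw [hx₁def]; abel
      rw [this, norm_neg, norm_smul, Real.norm_eq_abs, abs_of_nonneg (le_of_lt hηpos),
        hgnorm, mul_one]
    set t := ‖x - x₀‖ with htdef
    have ht0 : 0 ≤ t := norm_nonneg _
    have hA : u₀ x₀ - u₀ x ≤ t := by
      have h := hLip.dist_le_mul x₀ x
      rw [Real.dist_eq, dist_eq_norm] at h
      calc u₀ x₀ - u₀ x ≤ |u₀ x₀ - u₀ x| := le_abs_self _
        _ ≤ 1 * ‖x₀ - x‖ := h
        _ = t := by rw [one_mul, htdef, norm_sub_rev]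
    rw [hx₁n, hu₁]
    -- goal: 1/2 * η^2 + η * (u₀ x₀ - η) < 1/2 * t^2 + η * u₀ x
    by_cases hcase : u₀ x₀ - u₀ x = t ∧ t = η
    · -- equality case: contradiction with x ≠ x₁
      exfalso
      obtain ⟨hAt, htη⟩ := hcase
      set w : Euc d := x - x₀ with hwdef
      have hw : x₀ + w = x := by rw [hwdef]; abel
      have heqw : u₀ x₀ - u₀ (x₀ + w) = ‖w‖ := by rw [hw, ← htdef]; exact hAt
      have hdirw : w = -(‖w‖ • g) := dir_lemma hLip hd heqw
      apply hne
      have : ‖w‖ = η := by rw [hwdef, ← htdef]; exact htη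
      rw [← hw, hdirw, this, hx₁def]
      abel
    · rcases lt_or_eq_of_le hA with hAlt | hAeq
      · nlinarith [sq_nonneg (t - η), mul_pos hηpos (sub_pos.mpr hAlt)]
      · have htη : t ≠ η := fun h => hcase ⟨hAeq, h⟩
        have h0 : t - η ≠ 0 := sub_ne_zero.mpr htη
        have hpos : 0 < (t - η) ^ 2 :=
          lt_of_le_of_ne (sq_nonneg _) (Ne.symm (pow_ne_zero 2 h0))
        have eq1 : η * (u₀ x₀) - η * (u₀ x) = η * t := by rw [← hAeq]; ring
        have eq2 : (t - η) ^ 2 = t ^ 2 - 2 * t * η + η ^ 2 := by ring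
        linarith [hpos, eq1, eq2]
end
end

section
/- Let u be 1-Lipschitz on Ω and z a point lying in the interiors of two distinct transport rays of u. Then the set of all such points z (intersections of distinct transport ray interiors) is empty; equivalently, any point interior to a transport ray lies in exactly one transport ray. -/
open MeasureTheory

noncomputable section

/-- `[x,y]` is a transport ray of `u` in `Ω`: `x ≠ y`, the Lipschitz inequality is
saturated, and the segment is maximal with these properties. -/
def IsTransportRay {d : ℕ} (u : Euc d → ℝ) (Ω : Set (Euc d)) (x y : Euc d) : Prop :=
  x ≠ y ∧ segment ℝ x y ⊆ Ω ∧ u x - u y = ‖x - y‖ ∧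
    ∀ z w : Euc d, z ≠ w → segment ℝ z w ⊆ Ω → u z - u w = ‖z - w‖ →
      segment ℝ x y ⊆ segment ℝ z w → segment ℝ z w = segment ℝ x y

/-- On a saturated segment, `u` is affine: saturation holds to every intermediate point. -/
lemma ray_affine {d : ℕ} {Ω : Set (Euc d)} {u : Euc d → ℝ} (hu : LipschitzOnWith 1 u Ω)
    {p q w : Euc d} (hseg : segment ℝ p q ⊆ Ω) (hsat : u p - u q = ‖p - q‖)
    (hw : w ∈ segment ℝ p q) : u p - u w = ‖p - w‖ ∧ u w - u q = ‖w - q‖ := by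
  have hpΩ : p ∈ Ω := hseg (left_mem_segment ℝ p q)
  have hqΩ : q ∈ Ω := hseg (right_mem_segment ℝ p q)
  have hwΩ : w ∈ Ω := hseg hw
  have h1 : u p - u w ≤ ‖p - w‖ := by
    have := hu.dist_le_mul p hpΩ w hwΩ
    rw [Real.dist_eq, dist_eq_norm] at this
    simp only [NNReal.coe_one, one_mul] at this
    linarith [(abs_le.mp this).2]
  have h2 : u w - u q ≤ ‖w - q‖ := by
    have := hu.dist_le_mul w hwΩ q hqΩ
    rw [Real.dist_eq, dist_eq_norm] at this
    simp only [NNReal.coe_one, one_mul] at this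
    linarith [(abs_le.mp this).2]
  have htr : dist p w + dist w q = dist p q := dist_add_dist_of_mem_segment hw
  rw [dist_eq_norm, dist_eq_norm, dist_eq_norm] at htr
  constructor <;> linarith

set_option maxHeartbeats 1000000 in
/-- a point interior to a transport ray lies in exactly one transport ray:
two rays whose interiors share a point coincide as segments. -/
theorem transport_ray_interiors_disjoint {d : ℕ} (Ω : Set (Euc d))
    (hΩc : IsCompact Ω) (hΩconv : Convex ℝ Ω)
    (u : Euc d → ℝ) (hu : LipschitzOnWith 1 u Ω)
    (x y x' y' z : Euc d)
    (h1 : IsTransportRay u Ω x y) (h2 : IsTransportRay u Ω x' y')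
    (hz : z ∈ openSegment ℝ x y) (hz' : z ∈ openSegment ℝ x' y') :
    segment ℝ x y = segment ℝ x' y' := by
  obtain ⟨hxy, hΩ1, hsat1, hmax1⟩ := h1
  obtain ⟨hxy', hΩ2, hsat2, hmax2⟩ := h2
  set v : Euc d := y - x with hv_def
  set v' : Euc d := y' - x' with hv'_def
  have hv : v ≠ 0 := sub_ne_zero.mpr (Ne.symm hxy)
  have hv' : v' ≠ 0 := sub_ne_zero.mpr (Ne.symm hxy')
  -- parameters of z on each segment
  rw [openSegment_eq_image_lineMap] at hz hz'
  obtain ⟨s, hs, hzs⟩ := hz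
  obtain ⟨s', hs', hzs'⟩ := hz'
  obtain ⟨hs0, hs1⟩ := hs
  obtain ⟨hs'0, hs'1⟩ := hs'
  set L : ℝ →ᵃ[ℝ] Euc d := AffineMap.lineMap x y with hL_def
  have hL : ∀ t : ℝ, L t = x + t • v := by
    intro t
    rw [hL_def, AffineMap.lineMap_apply_module]
    module
  have hzx : z - x = s • v := by rw [← hzs, hL]; abel
  have hzx' : z - x' = s' • v' := by
    rw [← hzs', AffineMap.lineMap_apply_module]; module
  have hy'z : y' - z = (1 - s') • v' := by
    rw [← hzs', AffineMap.lineMap_apply_module]; module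
  -- affinity along the two rays
  have A1 := ray_affine hu hΩ1 hsat1 (by
    rw [segment_eq_image_lineMap]; exact ⟨s, ⟨hs0.le, hs1.le⟩, hzs⟩)
  have A2 := ray_affine hu hΩ2 hsat2 (by
    rw [segment_eq_image_lineMap]; exact ⟨s', ⟨hs'0.le, hs'1.le⟩, hzs'⟩)
  -- combined saturation from x to y' through z, forces collinearity
  have hxΩ : x ∈ Ω := hΩ1 (left_mem_segment ℝ x y)
  have hy'Ω : y' ∈ Ω := hΩ2 (right_mem_segment ℝ x' y')
  have hLip : u x - u y' ≤ ‖x - y'‖ := by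
    have := hu.dist_le_mul x hxΩ y' hy'Ω
    rw [Real.dist_eq, dist_eq_norm] at this
    simp only [NNReal.coe_one, one_mul] at this
    linarith [(abs_le.mp this).2]
  have htri : ‖x - y'‖ ≤ ‖x - z‖ + ‖z - y'‖ := by
    have : x - y' = (x - z) + (z - y') := by abel
    rw [this]; exact norm_add_le _ _
  have heq : ‖x - z‖ + ‖z - y'‖ = ‖x - y'‖ := by
    have := A1.1
    have := A2.2
    linarith
  have hwbtw : Wbtw ℝ x z y' := by
    rw [← dist_add_dist_eq_iff]
    rw [dist_eq_norm, dist_eq_norm, dist_eq_norm]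
    exact heq
  obtain ⟨θ, hθ, hθz⟩ := by
    have := hwbtw.mem_segment
    rw [segment_eq_image_lineMap] at this
    exact this
  have hθzx : z - x = θ • (y' - x) := by
    rw [← hθz, AffineMap.lineMap_apply_module]; module
  have hθy'z : y' - z = (1 - θ) • (y' - x) := by
    rw [← hθz, AffineMap.lineMap_apply_module]; module
  have hzx0 : z - x ≠ 0 := by
    rw [hzx]; exact smul_ne_zero (ne_of_gt hs0) hv
  have hy'z0 : y' - z ≠ 0 := by
    rw [hy'z]; exact smul_ne_zero (by linarith) hv'
  have hθ0 : 0 < θ := by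
    rcases lt_or_eq_of_le hθ.1 with h | h
    · exact h
    · exfalso; apply hzx0; rw [hθzx, ← h, zero_smul]
  have hθ1 : θ < 1 := by
    rcases lt_or_eq_of_le hθ.2 with h | h
    · exact h
    · exfalso; apply hy'z0; rw [hθy'z, h, sub_self, zero_smul]
  -- v' is a positive multiple of v
  set c : ℝ := (1 - θ) / θ * s with hc_def
  have hc : 0 < c := by
    have h1θ : (0:ℝ) < 1 - θ := by linarith
    rw [hc_def]
    positivity
  have hy'zc : y' - z = c • v := by
    have h1 : y' - z = ((1 - θ) / θ) • (z - x) := by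
      rw [hθzx, hθy'z, smul_smul, div_mul_cancel₀ _ (ne_of_gt hθ0)]
    rw [h1, hzx, smul_smul, hc_def]
  set r : ℝ := (1 - s')⁻¹ * c with hr_def
  have hr : 0 < r := by
    have : (0:ℝ) < 1 - s' := by linarith
    positivity
  have hv'r : v' = r • v := by
    have h1 : (1 - s') • v' = c • v := by rw [← hy'z, hy'zc]
    have h2 : (1 - s') ≠ 0 := by intro h; linarith [hs'1]; 
    calc v' = (1 - s')⁻¹ • ((1 - s') • v') := by rw [smul_smul, inv_mul_cancel₀ h2, one_smul]
      _ = (1 - s')⁻¹ • (c • v) := by rw [h1]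
      _ = r • v := by rw [smul_smul, hr_def]
  -- x', y' on the line of x, y
  set α : ℝ := s - s' * r with hα_def
  set β : ℝ := s - s' * r + r with hβ_def
  have hx'L : x' = L α := by
    have h3 : x' = z - s' • v' := by rw [← hzx']; abel
    rw [h3, ← hzs, hL, hL, hv'r, smul_smul, hα_def]
    module
  have hy'L : y' = L β := by
    have h3 : y' = x' + v' := by rw [hv'_def]; abel
    rw [h3, hx'L, hL, hL, hv'r, hβ_def, hα_def]
    module
  have hαs : α < s := by
    rw [hα_def]; nlinarith [mul_pos hs'0 hr]
  have hsβ : s < β := by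
    rw [hβ_def]; nlinarith [mul_pos hr (show (0:ℝ) < 1 - s' by linarith)]
  have hαβ : α < β := lt_trans hαs hsβ
  set a : ℝ := min 0 α with ha_def
  set b : ℝ := max 1 β with hb_def
  have ha0 : a ≤ 0 := min_le_left _ _
  have haα : a ≤ α := min_le_right _ _
  have hb1 : 1 ≤ b := le_max_left _ _
  have hbβ : β ≤ b := le_max_right _ _
  have has : a < s := lt_of_le_of_lt ha0 hs0
  have hsb : s < b := lt_of_lt_of_le hs1 hb1
  have hab : a < b := lt_trans has hsb
  -- segment of L-images
  have segLM : ∀ c e : ℝ, c ≤ e → segment ℝ (L c) (L e) = L '' Set.Icc c e := by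
    intro c e hce
    rw [segment_eq_image_lineMap, ← segment_eq_Icc hce, segment_eq_image_lineMap, Set.image_image]
    exact Set.image_congr' (fun t => (L.apply_lineMap c e t).symm)
  have hx0 : x = L 0 := by simp [hL_def]
  have hy1 : y = L 1 := by simp [hL_def]
  -- the big segment
  have hsub1 : segment ℝ x y ⊆ segment ℝ (L a) (L b) := by
    rw [hx0, hy1, segLM 0 1 zero_le_one, segLM a b hab.le]
    exact Set.image_mono (Set.Icc_subset_Icc ha0 hb1)
  have hsub2 : segment ℝ x' y' ⊆ segment ℝ (L a) (L b) := by
    rw [hx'L, hy'L, segLM α β hαβ.le, segLM a b hab.le]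
    exact Set.image_mono (Set.Icc_subset_Icc haα hbβ)
  have hΩsub : segment ℝ (L a) (L b) ⊆ Ω := by
    rw [segLM a b hab.le]
    rintro _ ⟨t, ht, rfl⟩
    by_cases h01 : 0 ≤ t ∧ t ≤ 1
    · apply hΩ1
      rw [segment_eq_image_lineMap]
      exact ⟨t, ⟨h01.1, h01.2⟩, rfl⟩
    · have htαβ : α ≤ t ∧ t ≤ β := by
        rcases not_and_or.mp h01 with h | h
        · have ht0 : t < 0 := lt_of_not_ge h
          constructor
          · rcases min_cases 0 α with ⟨hm, _⟩ | ⟨hm, hm'⟩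
            · exfalso; rw [ha_def] at ht; linarith [ht.1, hm]
            · rw [ha_def] at ht; linarith [ht.1, hm]
          · linarith
        · have ht1 : 1 < t := lt_of_not_ge h
          constructor
          · linarith
          · rcases max_cases 1 β with ⟨hm, _⟩ | ⟨hm, _⟩
            · exfalso; rw [hb_def] at ht; linarith [ht.2, hm]
            · rw [hb_def] at ht; linarith [ht.2, hm]
      apply hΩ2
      rw [hx'L, hy'L, segLM α β hαβ.le]
      exact ⟨t, ⟨htαβ.1, htαβ.2⟩, rfl⟩
  -- norms along the line
  have hLsub : ∀ t t' : ℝ, L t - L t' = (t - t') • v := by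
    intro t t'; rw [hL t, hL t']; module
  have hnorm : ∀ t t' : ℝ, t' ≤ t → ‖L t - L t'‖ = (t - t') * ‖v‖ := by
    intro t t' htt
    rw [hLsub, norm_smul, Real.norm_eq_abs, abs_of_nonneg (by linarith)]
  -- saturation on the big segment
  have hXz : u (L a) - u z = ‖L a - z‖ := by
    rcases le_total 0 α with h | h
    · rw [ha_def, min_eq_left h, ← hx0]; exact A1.1
    · rw [ha_def, min_eq_right h, ← hx'L]; exact A2.1
  have hzY : u z - u (L b) = ‖z - L b‖ := by
    rcases le_total β 1 with h | h
    · rw [hb_def, max_eq_left h, ← hy1]; exact A1.2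
    · rw [hb_def, max_eq_right h, ← hy'L]; exact A2.2
  have hsatXY : u (L a) - u (L b) = ‖L a - L b‖ := by
    have n1 : ‖L a - z‖ = (s - a) * ‖v‖ := by
      rw [← hzs]; rw [norm_sub_rev]; exact hnorm s a has.le
    have n2 : ‖z - L b‖ = (b - s) * ‖v‖ := by
      rw [← hzs]; rw [norm_sub_rev]; exact hnorm b s hsb.le
    have n3 : ‖L a - L b‖ = (b - a) * ‖v‖ := by
      rw [norm_sub_rev]; exact hnorm b a hab.le
    rw [n3]; rw [n1] at hXz; rw [n2] at hzY
    have : (s - a) * ‖v‖ + (b - s) * ‖v‖ = (b - a) * ‖v‖ := by ring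
    linarith
  have hneXY : L a ≠ L b := by
    intro h
    have := hLsub a b
    rw [h, sub_self] at this
    exact hv (by
      have h2 : (a - b) • v = 0 := this.symm
      rcases smul_eq_zero.mp h2 with h3 | h3
      · exfalso; have : a ≠ b := ne_of_lt hab; exact this (by linarith [sub_eq_zero.mp h3])
      · exact h3)
  have e1 := hmax1 (L a) (L b) hneXY hΩsub hsatXY hsub1
  have e2 := hmax2 (L a) (L b) hneXY hΩsub hsatXY hsub2
  rw [← e1, e2]
end
end
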